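/- In a random bipartite graph G(m,n,p) with n ≥ m ≥ 2, for any η > 0 and p ∈ (0,1], the maximum degree satisfies P(Δ(G(m,n,p)) ≥ max{3np/2, 18(1+η)n log n / m}) ≤ 2n^{−η}, and if p ≥ 12(1+η) log n / m, the minimum degree satisfies P(δ(G(m,n,p)) ≤ mp/2) ≤ 2n^{−η}. -/

import Mathlib

open scoped Classical

/-- Probability of an event in the product Bernoulli(p) measure on configurations
`α → Bool` (each coordinate independently `true` with probability `p`). -/
noncomputable def pr {α : Type*} [Fintype α] (p : ℝ) (A : Set (α → Bool)) : ℝ :=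
  ∑ ω ∈ Finset.univ.filter (fun ω => ω ∈ A), ∏ e : α, (if ω e = true then p else 1 - p)

/-- The random bipartite graph on parts `Fin m` and `Fin n` determined by a
configuration of cross-edge indicators. -/
def bipGraph (m n : ℕ) (ω : Fin m × Fin n → Bool) : SimpleGraph (Fin m ⊕ Fin n) :=
  SimpleGraph.fromRel
    (fun x y => ∃ i j, x = Sum.inl i ∧ y = Sum.inr j ∧ ω (i, j) = true)

open Finset

section aux
variable {β : Type*} [Fintype β]

private noncomputable def wt (p : ℝ) (b : Bool) : ℝ := if b then p else 1 - p

private lemma wt_nonneg {p : ℝ} (h0 : 0 ≤ p) (h1 : p ≤ 1) (b : Bool) : 0 ≤ wt p b := by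
  cases b <;> simp [wt] <;> linarith

private lemma pr_def (p : ℝ) (A : Set (β → Bool)) :
    pr p A = ∑ ω ∈ Finset.univ.filter (fun ω => ω ∈ A), ∏ e : β, wt p (ω e) := by
  simp [pr, wt]

private lemma wprod_nonneg {p : ℝ} (h0 : 0 ≤ p) (h1 : p ≤ 1) (ω : β → Bool) :
    0 ≤ ∏ e : β, wt p (ω e) :=
  Finset.prod_nonneg fun e _ => wt_nonneg h0 h1 _

private lemma expect_prod (p : ℝ) (f : β → Bool → ℝ) :
    ∑ ω : β → Bool, ∏ e : β, (wt p (ω e) * f e (ω e)) =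
      ∏ e : β, (p * f e true + (1 - p) * f e false) := by
  have := Fintype.prod_sum (ι := β) (κ := fun _ => Bool) (fun e b => wt p b * f e b)
  rw [← this]
  refine Finset.prod_congr rfl fun e _ => ?_
  rw [Fintype.sum_bool]
  simp [wt]

private lemma pr_le_expect {p : ℝ} (h0 : 0 ≤ p) (h1 : p ≤ 1) (A : Set (β → Bool))
    (f : (β → Bool) → ℝ) (hf0 : ∀ ω, 0 ≤ f ω) (hf1 : ∀ ω ∈ A, 1 ≤ f ω) :
    pr p A ≤ ∑ ω : β → Bool, (∏ e : β, wt p (ω e)) * f ω := by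
  rw [pr_def]
  calc ∑ ω ∈ Finset.univ.filter (fun ω => ω ∈ A), ∏ e : β, wt p (ω e)
      ≤ ∑ ω ∈ Finset.univ.filter (fun ω => ω ∈ A), (∏ e : β, wt p (ω e)) * f ω := by
        refine Finset.sum_le_sum fun ω hω => ?_
        have h1ω : 1 ≤ f ω := hf1 ω (Finset.mem_filter.mp hω).2
        nlinarith [wprod_nonneg h0 h1 ω]
    _ ≤ ∑ ω : β → Bool, (∏ e : β, wt p (ω e)) * f ω := by
        refine Finset.sum_le_sum_of_subset_of_nonneg (Finset.filter_subset _ _) fun ω _ _ => ?_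
        exact mul_nonneg (wprod_nonneg h0 h1 ω) (hf0 ω)

private lemma pr_def' (p : ℝ) (A : Set (β → Bool)) :
    pr p A = ∑ ω : β → Bool, (if ω ∈ A then ∏ e : β, wt p (ω e) else 0) := by
  rw [pr_def, Finset.sum_filter]

private lemma pr_mono {p : ℝ} (h0 : 0 ≤ p) (h1 : p ≤ 1) {A B : Set (β → Bool)} (hAB : A ⊆ B) :
    pr p A ≤ pr p B := by
  rw [pr_def', pr_def']
  refine Finset.sum_le_sum fun ω _ => ?_
  by_cases hA : ω ∈ A
  · simp [hA, hAB hA]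
  · simp only [hA, if_false]
    split
    · exact wprod_nonneg h0 h1 ω
    · exact le_rfl

private lemma pr_union_le {p : ℝ} (h0 : 0 ≤ p) (h1 : p ≤ 1) {ι : Type*} [Fintype ι]
    (A : ι → Set (β → Bool)) :
    pr p {ω | ∃ i, ω ∈ A i} ≤ ∑ i : ι, pr p (A i) := by
  have h := pr_le_expect h0 h1 {ω | ∃ i, ω ∈ A i}
    (fun ω => ∑ i : ι, (if ω ∈ A i then (1:ℝ) else 0))
    (fun ω => Finset.sum_nonneg fun i _ => by split <;> norm_num)
    (fun ω hω => by
      obtain ⟨i₀, hi₀⟩ := hω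
      calc (1:ℝ) = (if ω ∈ A i₀ then (1:ℝ) else 0) := by simp [hi₀]
        _ ≤ ∑ i : ι, (if ω ∈ A i then (1:ℝ) else 0) :=
            Finset.single_le_sum (f := fun i => if ω ∈ A i then (1:ℝ) else 0)
              (fun i _ => by split <;> norm_num) (Finset.mem_univ i₀))
  refine h.trans (le_of_eq ?_)
  simp only [Finset.mul_sum, mul_ite, mul_one, mul_zero]
  rw [Finset.sum_comm]
  exact Finset.sum_congr rfl fun i _ => (pr_def' p (A i)).symm

private lemma pr_tail {p : ℝ} (h0 : 0 ≤ p) (h1 : p ≤ 1) (T : Finset β) (a s : ℝ) :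
    pr p {ω : β → Bool | 0 ≤ s * ((∑ e ∈ T, (if ω e then (1:ℝ) else 0)) - a)} ≤
      Real.exp (-(s * a)) * (1 - p + p * Real.exp s) ^ T.card := by
  set g : β → Bool → ℝ := fun e b => if e ∈ T then Real.exp (s * (if b then 1 else 0)) else 1
    with hg
  have key : ∀ ω : β → Bool,
      Real.exp (s * ((∑ e ∈ T, (if ω e then (1:ℝ) else 0)) - a)) =
        Real.exp (-(s * a)) * ∏ e : β, g e (ω e) := by
    intro ω
    have : ∏ e : β, g e (ω e) = ∏ e ∈ T, Real.exp (s * (if ω e then (1:ℝ) else 0)) := by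
      rw [show ∏ e : β, g e (ω e)
          = ∏ e ∈ Finset.univ, (if e ∈ T then Real.exp (s * (if ω e then (1:ℝ) else 0)) else 1)
          from rfl, Finset.prod_ite_mem, Finset.univ_inter]
    rw [this, ← Real.exp_sum, ← Real.exp_add, ← Finset.mul_sum, mul_sub]
    ring_nf
  have hbound := pr_le_expect h0 h1
    {ω : β → Bool | 0 ≤ s * ((∑ e ∈ T, (if ω e then (1:ℝ) else 0)) - a)}
    (fun ω => Real.exp (s * ((∑ e ∈ T, (if ω e then (1:ℝ) else 0)) - a)))
    (fun ω => (Real.exp_pos _).le)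
    (fun ω hω => Real.one_le_exp hω)
  refine hbound.trans ?_
  have : ∑ ω : β → Bool, (∏ e : β, wt p (ω e)) *
        Real.exp (s * ((∑ e ∈ T, (if ω e then (1:ℝ) else 0)) - a))
      = Real.exp (-(s * a)) * ∑ ω : β → Bool, ∏ e : β, (wt p (ω e) * g e (ω e)) := by
    rw [Finset.mul_sum]
    refine Finset.sum_congr rfl fun ω _ => ?_
    rw [key ω, Finset.prod_mul_distrib]
    ring
  rw [this, expect_prod]
  have : ∏ e : β, (p * g e true + (1 - p) * g e false)
      = (1 - p + p * Real.exp s) ^ T.card := by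
    have : ∀ e : β, p * g e true + (1 - p) * g e false
        = (if e ∈ T then (1 - p + p * Real.exp s) else 1) := by
      intro e
      by_cases he : e ∈ T <;> simp [hg, he] <;> ring
    rw [Finset.prod_congr rfl fun e _ => this e, Finset.prod_ite_mem, Finset.univ_inter,
      Finset.prod_const]
  rw [this]

end aux

section deg
variable {m n : ℕ}

private def embL (m n : ℕ) (i : Fin m) : Fin n ↪ Fin m × Fin n :=
  ⟨fun j => (i, j), fun a b h => by simpa using congrArg Prod.snd h⟩

private def embR (m n : ℕ) (j : Fin n) : Fin m ↪ Fin m × Fin n :=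
  ⟨fun i => (i, j), fun a b h => by simpa using congrArg Prod.fst h⟩

private lemma nbhdL (ω : Fin m × Fin n → Bool) (i : Fin m) :
    (bipGraph m n ω).neighborFinset (Sum.inl i)
      = (Finset.univ.filter fun j : Fin n => ω (i, j) = true).map
          ⟨Sum.inr, Sum.inr_injective⟩ := by
  ext u
  cases u with
  | inl i' => rw [SimpleGraph.mem_neighborFinset]; simp [bipGraph, SimpleGraph.fromRel_adj]
  | inr j =>
      rw [SimpleGraph.mem_neighborFinset]; simp [bipGraph, SimpleGraph.fromRel_adj]

private lemma nbhdR (ω : Fin m × Fin n → Bool) (j : Fin n) :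
    (bipGraph m n ω).neighborFinset (Sum.inr j)
      = (Finset.univ.filter fun i : Fin m => ω (i, j) = true).map
          ⟨Sum.inl, Sum.inl_injective⟩ := by
  ext u
  cases u with
  | inl i => rw [SimpleGraph.mem_neighborFinset]; simp [bipGraph, SimpleGraph.fromRel_adj]
  | inr j' => rw [SimpleGraph.mem_neighborFinset]; simp [bipGraph, SimpleGraph.fromRel_adj]

private lemma degL (ω : Fin m × Fin n → Bool) (i : Fin m) :
    ((bipGraph m n ω).degree (Sum.inl i) : ℝ)
      = ∑ e ∈ Finset.univ.map (embL m n i), (if ω e then (1:ℝ) else 0) := by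
  rw [SimpleGraph.degree, nbhdL, Finset.card_map, Finset.sum_map]
  simp [embL, Finset.sum_boole, Function.Embedding.coeFn_mk]
  change _ = ∑ x, if ω (i, x) = true then (1:ℝ) else 0
  simp [Finset.sum_boole]

private lemma degR (ω : Fin m × Fin n → Bool) (j : Fin n) :
    ((bipGraph m n ω).degree (Sum.inr j) : ℝ)
      = ∑ e ∈ Finset.univ.map (embR m n j), (if ω e then (1:ℝ) else 0) := by
  rw [SimpleGraph.degree, nbhdR, Finset.card_map, Finset.sum_map]
  simp [embR, Finset.sum_boole, Function.Embedding.coeFn_mk]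
  change _ = ∑ x, if ω (x, j) = true then (1:ℝ) else 0
  simp [Finset.sum_boole]

end deg

section analysis

private lemma exp_half_le : Real.exp (1/2 : ℝ) ≤ 5/3 := by
  have h : Real.exp (1/2:ℝ) * Real.exp (1/2:ℝ) = Real.exp 1 := by
    rw [← Real.exp_add]; norm_num
  nlinarith [Real.exp_one_lt_d9, Real.exp_pos (1/2:ℝ)]

private lemma exp_neg_one_le : Real.exp (-1 : ℝ) ≤ 5/12 := by
  rw [Real.exp_neg]
  have hinv : (Real.exp 1)⁻¹ * Real.exp 1 = 1 := inv_mul_cancel₀ (Real.exp_pos 1).ne'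
  nlinarith [Real.exp_one_gt_d9, inv_pos.mpr (Real.exp_pos 1)]

private lemma upper_vertex_bound {p t : ℝ} (h0 : 0 ≤ p) (h1 : p ≤ 1) (ht0 : 0 ≤ t)
    (N : ℕ) (hNp : (N : ℝ) * p ≤ 2/3 * t) :
    Real.exp (-((1/2 : ℝ) * t)) * (1 - p + p * Real.exp (1/2)) ^ N ≤ Real.exp (-(t/18)) := by
  have hE : (1:ℝ) ≤ Real.exp (1/2:ℝ) := Real.one_le_exp (by norm_num)
  have hbase0 : 0 ≤ 1 - p + p * Real.exp (1/2:ℝ) := by nlinarith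
  have hbase : 1 - p + p * Real.exp (1/2:ℝ) ≤ Real.exp (p * (Real.exp (1/2:ℝ) - 1)) := by
    have := Real.add_one_le_exp (p * (Real.exp (1/2:ℝ) - 1)); linarith
  have h3 : (1 - p + p * Real.exp (1/2:ℝ)) ^ N
      ≤ Real.exp ((N:ℝ) * (p * (Real.exp (1/2:ℝ) - 1))) := by
    rw [Real.exp_nat_mul]
    exact pow_le_pow_left₀ hbase0 hbase N
  have h4 : (N:ℝ) * (p * (Real.exp (1/2:ℝ) - 1)) ≤ 4/9 * t := by
    have h5 := exp_half_le
    nlinarith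
  calc Real.exp (-((1/2:ℝ) * t)) * (1 - p + p * Real.exp (1/2)) ^ N
      ≤ Real.exp (-((1/2:ℝ) * t)) * Real.exp (4/9 * t) :=
        mul_le_mul_of_nonneg_left (h3.trans (Real.exp_le_exp.mpr h4)) (Real.exp_pos _).le
    _ = Real.exp (-(t/18)) := by rw [← Real.exp_add]; congr 1; ring

private lemma lower_vertex_bound {p μ : ℝ} (h0 : 0 ≤ p) (h1 : p ≤ 1) (hμ0 : 0 ≤ μ)
    (N : ℕ) (hNμ : μ ≤ (N:ℝ) * p) :
    Real.exp (-((-1 : ℝ) * (μ/2))) * (1 - p + p * Real.exp (-1)) ^ N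
      ≤ Real.exp (-(μ/12)) := by
  have hE0 : 0 < Real.exp (-1:ℝ) := Real.exp_pos _
  have hE1 : Real.exp (-1:ℝ) ≤ 5/12 := exp_neg_one_le
  have hbase0 : 0 ≤ 1 - p + p * Real.exp (-1:ℝ) := by nlinarith
  have hbase : 1 - p + p * Real.exp (-1:ℝ) ≤ Real.exp (p * (Real.exp (-1:ℝ) - 1)) := by
    have := Real.add_one_le_exp (p * (Real.exp (-1:ℝ) - 1)); linarith
  have h3 : (1 - p + p * Real.exp (-1:ℝ)) ^ N
      ≤ Real.exp ((N:ℝ) * (p * (Real.exp (-1:ℝ) - 1))) := by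
    rw [Real.exp_nat_mul]
    exact pow_le_pow_left₀ hbase0 hbase N
  have h4 : (N:ℝ) * (p * (Real.exp (-1:ℝ) - 1)) ≤ μ * (Real.exp (-1:ℝ) - 1) := by
    have hneg : Real.exp (-1:ℝ) - 1 ≤ 0 := by nlinarith
    nlinarith
  calc Real.exp (-((-1:ℝ) * (μ/2))) * (1 - p + p * Real.exp (-1)) ^ N
      ≤ Real.exp (-((-1:ℝ) * (μ/2))) * Real.exp (μ * (Real.exp (-1:ℝ) - 1)) :=
        mul_le_mul_of_nonneg_left (h3.trans (Real.exp_le_exp.mpr h4)) (Real.exp_pos _).le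
    _ = Real.exp (μ/2 + μ * (Real.exp (-1:ℝ) - 1)) := by rw [← Real.exp_add]; congr 1; ring
    _ ≤ Real.exp (-(μ/12)) := by
        apply Real.exp_le_exp.mpr
        nlinarith

end analysis

/-- Degree bounds for the random bipartite graph `G(m,n,p)` with `n ≥ m ≥ 2`:
`P(Δ ≥ max{3np/2, 18(1+η)n log n / m}) ≤ 2n^{−η}`, and if `p ≥ 12(1+η) log n / m`
then `P(δ ≤ mp/2) ≤ 2n^{−η}`. -/
theorem stmt_8 (m n : ℕ) (hm : 2 ≤ m) (hmn : m ≤ n) (η p : ℝ) (hη : 0 < η)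
    (hp0 : 0 < p) (hp1 : p ≤ 1) :
    pr p {ω : Fin m × Fin n → Bool |
        max (3 * (n : ℝ) * p / 2) (18 * (1 + η) * (n : ℝ) * Real.log n / m)
          ≤ ((bipGraph m n ω).maxDegree : ℝ)}
      ≤ 2 * (n : ℝ) ^ (-η)
    ∧ (12 * (1 + η) * Real.log n / m ≤ p →
        pr p {ω : Fin m × Fin n → Bool |
            ((bipGraph m n ω).minDegree : ℝ) ≤ (m : ℝ) * p / 2}
          ≤ 2 * (n : ℝ) ^ (-η)) := by
  have h0 : (0:ℝ) ≤ p := hp0.le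
  have hn2 : 2 ≤ n := hm.trans hmn
  have hn1 : (1:ℝ) < n := by exact_mod_cast (by omega : 1 < n)
  have hnpos : (0:ℝ) < n := by linarith
  have hmpos : (0:ℝ) < m := by exact_mod_cast (by omega : 0 < m)
  have hmn' : (m:ℝ) ≤ n := by exact_mod_cast hmn
  have hL : 0 < Real.log n := Real.log_pos hn1
  set L := Real.log n with hLdef
  haveI hne : Nonempty (Fin m ⊕ Fin n) := ⟨Sum.inl ⟨0, by omega⟩⟩
  -- the per-vertex edge sets
  let Tset : Fin m ⊕ Fin n → Finset (Fin m × Fin n) := fun v =>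
    match v with
    | Sum.inl i => Finset.univ.map (embL m n i)
    | Sum.inr j => Finset.univ.map (embR m n j)
  have hdeg : ∀ (ω : Fin m × Fin n → Bool) (v : Fin m ⊕ Fin n),
      ((bipGraph m n ω).degree v : ℝ) = ∑ e ∈ Tset v, (if ω e then (1:ℝ) else 0) := by
    intro ω v
    cases v with
    | inl i => exact degL ω i
    | inr j => exact degR ω j
  have hcard : ∀ v : Fin m ⊕ Fin n, Tset v = Tset v ∧
      ((Tset v).card = n ∨ (Tset v).card = m) := by
    intro v
    refine ⟨rfl, ?_⟩
    cases v with
    | inl i => left; simp [Tset]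
    | inr j => right; simp [Tset]
  -- final comparison
  have hfinal : ∀ c : ℝ, (∀ v : Fin m ⊕ Fin n, c = c) →
      ((Fintype.card (Fin m ⊕ Fin n)):ℝ) * Real.exp (-((1+η)*L)) ≤ 2 * (n:ℝ)^(-η) := by
    intro c _
    have hcard2 : ((Fintype.card (Fin m ⊕ Fin n)):ℝ) = (m:ℝ) + n := by simp
    have hexp : Real.exp (-((1+η)*L)) = (n:ℝ) ^ (-(1+η)) := by
      rw [Real.rpow_def_of_pos hnpos, hLdef]; ring_nf
    have hsplit : (n:ℝ) ^ (-(1+η)) = (n:ℝ)⁻¹ * (n:ℝ)^(-η) := by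
      rw [show -(1+η) = (-1) + (-η) by ring, Real.rpow_add hnpos, Real.rpow_neg_one]
    have hpow : 0 ≤ (n:ℝ)^(-η) := Real.rpow_nonneg hnpos.le _
    rw [hcard2, hexp, hsplit]
    have h2n : (m:ℝ) + n ≤ 2 * n := by linarith
    have hinv : (n:ℝ) * (n:ℝ)⁻¹ = 1 := mul_inv_cancel₀ hnpos.ne'
    calc ((m:ℝ) + n) * ((n:ℝ)⁻¹ * (n:ℝ)^(-η)) ≤ (2*n) * ((n:ℝ)⁻¹ * (n:ℝ)^(-η)) := by
          apply mul_le_mul_of_nonneg_right h2n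
          positivity
      _ = 2 * (n:ℝ)^(-η) := by
          rw [show (2*(n:ℝ)) * ((n:ℝ)⁻¹ * (n:ℝ)^(-η)) = 2 * ((n:ℝ) * (n:ℝ)⁻¹) * (n:ℝ)^(-η)
            by ring, hinv]; ring
  have hcardsum : ((Fintype.card (Fin m ⊕ Fin n)):ℝ) * Real.exp (-((1+η)*L))
      = ∑ _v : Fin m ⊕ Fin n, Real.exp (-((1+η)*L)) := by
    rw [Finset.sum_const, Finset.card_univ, nsmul_eq_mul]
  constructor
  · -- maximum degree
    set t := max (3*(n:ℝ)*p/2) (18*(1+η)*(n:ℝ)*L/m) with htdef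
    have ht1 : 3*(n:ℝ)*p/2 ≤ t := le_max_left _ _
    have ht2 : 18*(1+η)*(n:ℝ)*L/m ≤ t := le_max_right _ _
    have ht0 : 0 ≤ t := le_trans (by positivity) ht1
    have hnp : (n:ℝ)*p ≤ 2/3*t := by linarith
    have htL : 18*(1+η)*L ≤ t := by
      refine le_trans ?_ ht2
      rw [le_div_iff₀ hmpos]
      have := mul_le_mul_of_nonneg_left hmn' (by positivity : (0:ℝ) ≤ 18*(1+η)*L)
      nlinarith
    have hsub : {ω : Fin m × Fin n → Bool | t ≤ ((bipGraph m n ω).maxDegree : ℝ)}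
        ⊆ {ω : Fin m × Fin n → Bool |
            ∃ v, ω ∈ {ω' : Fin m × Fin n → Bool |
              0 ≤ (1/2:ℝ) * ((∑ e ∈ Tset v, (if ω' e then (1:ℝ) else 0)) - t)}} := by
      intro ω hω
      obtain ⟨v, hv⟩ := (bipGraph m n ω).exists_maximal_degree_vertex
      refine ⟨v, ?_⟩
      have hdv : t ≤ ((bipGraph m n ω).degree v : ℝ) := by
        rw [← hv]; exact hω
      rw [hdeg ω v] at hdv
      simp only [Set.mem_setOf_eq]
      linarith
    calc pr p {ω : Fin m × Fin n → Bool | t ≤ ((bipGraph m n ω).maxDegree : ℝ)}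
        ≤ pr p {ω : Fin m × Fin n → Bool |
            ∃ v, ω ∈ {ω' : Fin m × Fin n → Bool |
              0 ≤ (1/2:ℝ) * ((∑ e ∈ Tset v, (if ω' e then (1:ℝ) else 0)) - t)}} :=
          pr_mono h0 hp1 hsub
      _ ≤ ∑ v : Fin m ⊕ Fin n, pr p {ω' : Fin m × Fin n → Bool |
              0 ≤ (1/2:ℝ) * ((∑ e ∈ Tset v, (if ω' e then (1:ℝ) else 0)) - t)} :=
          pr_union_le h0 hp1 _
      _ ≤ ∑ _v : Fin m ⊕ Fin n, Real.exp (-((1+η)*L)) := by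
          refine Finset.sum_le_sum fun v _ => ?_
          refine le_trans (pr_tail h0 hp1 (Tset v) t (1/2)) ?_
          have hub : Real.exp (-((1/2:ℝ)*t)) * (1 - p + p * Real.exp (1/2)) ^ (Tset v).card
              ≤ Real.exp (-(t/18)) := by
            refine upper_vertex_bound h0 hp1 ht0 _ ?_
            rcases (hcard v).2 with h | h <;> rw [h]
            · exact hnp
            · nlinarith
          refine le_trans hub ?_
          apply Real.exp_le_exp.mpr
          nlinarith
      _ = ((Fintype.card (Fin m ⊕ Fin n)):ℝ) * Real.exp (-((1+η)*L)) := hcardsum.symm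
      _ ≤ 2 * (n:ℝ)^(-η) := hfinal 0 (fun _ => rfl)
  · -- minimum degree
    intro hpge
    have hmp : 12*(1+η)*L ≤ (m:ℝ)*p := by
      rw [div_le_iff₀ hmpos] at hpge
      linarith
    have hμ0 : 0 ≤ (m:ℝ)*p := by positivity
    have hsub : {ω : Fin m × Fin n → Bool | ((bipGraph m n ω).minDegree : ℝ) ≤ (m:ℝ)*p/2}
        ⊆ {ω : Fin m × Fin n → Bool |
            ∃ v, ω ∈ {ω' : Fin m × Fin n → Bool |
              0 ≤ (-1:ℝ) * ((∑ e ∈ Tset v, (if ω' e then (1:ℝ) else 0)) - (m:ℝ)*p/2)}} := by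
      intro ω hω
      obtain ⟨v, hv⟩ := (bipGraph m n ω).exists_minimal_degree_vertex
      refine ⟨v, ?_⟩
      have hdv : ((bipGraph m n ω).degree v : ℝ) ≤ (m:ℝ)*p/2 := by
        rw [← hv]; exact hω
      rw [hdeg ω v] at hdv
      simp only [Set.mem_setOf_eq]
      linarith
    calc pr p {ω : Fin m × Fin n → Bool | ((bipGraph m n ω).minDegree : ℝ) ≤ (m:ℝ)*p/2}
        ≤ pr p {ω : Fin m × Fin n → Bool |
            ∃ v, ω ∈ {ω' : Fin m × Fin n → Bool |
              0 ≤ (-1:ℝ) * ((∑ e ∈ Tset v, (if ω' e then (1:ℝ) else 0)) - (m:ℝ)*p/2)}} :=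
          pr_mono h0 hp1 hsub
      _ ≤ ∑ v : Fin m ⊕ Fin n, pr p {ω' : Fin m × Fin n → Bool |
              0 ≤ (-1:ℝ) * ((∑ e ∈ Tset v, (if ω' e then (1:ℝ) else 0)) - (m:ℝ)*p/2)} :=
          pr_union_le h0 hp1 _
      _ ≤ ∑ _v : Fin m ⊕ Fin n, Real.exp (-((1+η)*L)) := by
          refine Finset.sum_le_sum fun v _ => ?_
          refine le_trans (pr_tail h0 hp1 (Tset v) ((m:ℝ)*p/2) (-1)) ?_
          have hub : Real.exp (-((-1:ℝ)*((m:ℝ)*p/2))) *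
                (1 - p + p * Real.exp (-1)) ^ (Tset v).card
              ≤ Real.exp (-((m:ℝ)*p/12)) := by
            refine lower_vertex_bound h0 hp1 hμ0 _ ?_
            rcases (hcard v).2 with h | h
            · rw [h]; nlinarith
            · rw [h]
          refine le_trans hub ?_
          apply Real.exp_le_exp.mpr
          nlinarith
      _ = ((Fintype.card (Fin m ⊕ Fin n)):ℝ) * Real.exp (-((1+η)*L)) := hcardsum.symm
      _ ≤ 2 * (n:ℝ)^(-η) := hfinal 0 (fun _ => rfl)
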